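/- For P ∈ (0,1), the system Q₁+Q₂+Q₃+Q₄+Q₅ = 1, Q₁ = (Q₂+Q₃+Q₄+Q₅)(1−P), Q₂ = Q₁(1−P), Q₃ = (Q₁+Q₂+Q₅)P, Q₄ = Q₃P, Q₅ = Q₄P has the unique solution Q₁ = (1−P)/(2−P), Q₂ = (1−P)²/(2−P), Q₃ = P/(1+P+P²), Q₄ = P²/(1+P+P²), Q₅ = P³/(1+P+P²). -/
import Mathlib

/-- The stationary distribution of the 5-state Type-II AEDS chain is unique:
the balance equations force the stated closed form. -/
theorem stmt7 (P : ℝ) (hP0 : 0 < P) (hP1 : P < 1)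
    (Q1 Q2 Q3 Q4 Q5 : ℝ)
    (hsum : Q1 + Q2 + Q3 + Q4 + Q5 = 1)
    (h1 : Q1 = (Q2 + Q3 + Q4 + Q5) * (1 - P))
    (h2 : Q2 = Q1 * (1 - P))
    (h3 : Q3 = (Q1 + Q2 + Q5) * P)
    (h4 : Q4 = Q3 * P)
    (h5 : Q5 = Q4 * P) :
    Q1 = (1 - P)/(2 - P) ∧ Q2 = (1 - P)^2/(2 - P) ∧
    Q3 = P/(1 + P + P^2) ∧ Q4 = P^2/(1 + P + P^2) ∧ Q5 = P^3/(1 + P + P^2) := by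
  have h2P : (2 - P) ≠ 0 := by nlinarith
  have hD : (1 + P + P^2) ≠ 0 := by nlinarith
  have e1 : Q1 * (2 - P) = 1 - P := by nlinarith [h1, hsum]
  have e3 : Q3 * (1 + P + P^2) = P := by nlinarith [h3, hsum, h4, h5]
  refine ⟨?_, ?_, ?_, ?_, ?_⟩
  · field_simp; linarith
  · field_simp; nlinarith [e1, h2]
  · field_simp; linarith
  · field_simp; nlinarith [e3, h4]
  · field_simp; nlinarith [e3, h4, h5]
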